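/- arXiv:1604.00985 — 4 statements merged into one kernel-verified Lean document; each statement's English description precedes it below -/
import Mathlib

section
/- Let C > 0 be a real constant and let f : ℝ → ℝ be a differentiable function satisfying f'(t) = f(t)² − C for every t ∈ ℝ. Then f(t)² ≤ C for all t ∈ ℝ. -/
open Set Filter Topology

/-- Auxiliary: no global solution of `f' = f² - C` can exceed `√C` anywhere. -/
lemma riccati_no_big (C : ℝ) (hC : 0 < C) (f : ℝ → ℝ)
    (hf : Differentiable ℝ f)
    (hode : ∀ t : ℝ, deriv f t = f t ^ 2 - C)
    (t₀ : ℝ) (h : Real.sqrt C < f t₀) : False := by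
  set a := f t₀ with ha_def
  have h0 : 0 < a := lt_of_le_of_lt (Real.sqrt_nonneg C) h
  have hsq : Real.sqrt C ^ 2 = C := Real.sq_sqrt hC.le
  have ha2 : C < a ^ 2 := by nlinarith [Real.sqrt_nonneg C]
  -- Step 1: forward invariance `a ≤ f t` for `t ≥ t₀`.
  have hinv : ∀ t, t₀ ≤ t → a ≤ f t := by
    intro t₁ ht₁
    by_contra hlt
    push_neg at hlt
    have ht₀₁ : t₀ < t₁ := by
      rcases lt_or_eq_of_le ht₁ with h' | h'
      · exact h'
      · exact absurd hlt (by rw [← h']; exact lt_irrefl _)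
    set S := Icc t₀ t₁ ∩ f ⁻¹' (Ici a) with hS_def
    have hS_closed : IsClosed S :=
      isClosed_Icc.inter (isClosed_Ici.preimage hf.continuous)
    have hne : S.Nonempty := ⟨t₀, ⟨le_refl _, ht₁⟩, le_refl a⟩
    have hbdd : BddAbove S := ⟨t₁, fun x hx => hx.1.2⟩
    set c := sSup S with hc_def
    have hcS : c ∈ S := hS_closed.csSup_mem hne hbdd
    have hac : a ≤ f c := hcS.2
    have hc1 : c < t₁ := lt_of_le_of_ne hcS.1.2 (by
      intro hceq
      rw [hceq] at hac
      exact absurd hac (not_le.2 hlt))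
    have hd : HasDerivAt f (f c ^ 2 - C) c := by
      have := (hf c).hasDerivAt
      rwa [hode c] at this
    have hdpos : 0 < f c ^ 2 - C := by nlinarith
    have ht : Tendsto (slope f c) (𝓝[≠] c) (𝓝 (f c ^ 2 - C)) :=
      hasDerivAt_iff_tendsto_slope.1 hd
    have hev : ∀ᶠ t in 𝓝[≠] c, 0 < slope f c t :=
      ht.eventually (eventually_gt_nhds hdpos)
    have hev2 : ∀ᶠ t in 𝓝[>] c, 0 < slope f c t :=
      hev.filter_mono (nhdsWithin_mono c (fun x hx => ne_of_gt hx))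
    have hIoo : Ioo c t₁ ∈ 𝓝[>] c := Ioo_mem_nhdsGT_of_mem ⟨le_refl c, hc1⟩
    obtain ⟨t, hslope, htmem⟩ :=
      (hev2.and (eventually_of_mem hIoo fun x hx => hx)).exists
    have htc : 0 < t - c := sub_pos.2 htmem.1
    have hft : f c < f t := by
      have hs : slope f c t = (f t - f c) / (t - c) := slope_def_field f c t
      rw [hs] at hslope
      have : 0 < f t - f c := by
        by_contra hle
        push_neg at hle
        have : (f t - f c) / (t - c) ≤ 0 := div_nonpos_of_nonpos_of_nonneg hle htc.le
        linarith
      linarith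
    have htS : t ∈ S := ⟨⟨hcS.1.1.trans htmem.1.le, htmem.2.le⟩, le_trans hac hft.le⟩
    exact absurd htmem.1 (not_lt.2 (le_csSup hbdd htS))
  have hfpos : ∀ t, t₀ ≤ t → 0 < f t := fun t ht => lt_of_lt_of_le h0 (hinv t ht)
  -- Step 2: comparison on `-1/f` forces blow-up.
  set k := 1 - C / a ^ 2 with hk_def
  have ha2pos : (0:ℝ) < a ^ 2 := by positivity
  have hk : 0 < k := by
    have : C / a ^ 2 < 1 := (div_lt_one ha2pos).2 ha2
    simp only [hk_def]; linarith
  set φ : ℝ → ℝ := fun t => -(f t)⁻¹ - k * t with hφ_def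
  have hφd : ∀ t, t₀ < t → HasDerivAt φ ((f t ^ 2 - C) / f t ^ 2 - k) t := by
    intro t ht
    have hft := hfpos t ht.le
    have h1 : HasDerivAt f (f t ^ 2 - C) t := by
      have := (hf t).hasDerivAt
      rwa [hode t] at this
    have h2 : HasDerivAt (fun s => (f s)⁻¹) (-(f t ^ 2 - C) / f t ^ 2) t := h1.inv hft.ne'
    have h4 : HasDerivAt (fun s : ℝ => k * s) k t := by
      simpa using (hasDerivAt_id t).const_mul k
    have h5 := h2.neg.sub h4
    have h6 : (f t ^ 2 - C) / f t ^ 2 - k = -(-(f t ^ 2 - C) / f t ^ 2) - k := by ring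
    rw [h6]
    exact h5
  have hφmono : MonotoneOn φ (Ici t₀) := by
    apply monotoneOn_of_deriv_nonneg (convex_Ici t₀)
    · apply ContinuousOn.sub
      · exact (hf.continuous.continuousOn.inv₀ fun t ht => (hfpos t ht).ne').neg
      · exact (continuous_const.mul continuous_id).continuousOn
    · intro t ht
      rw [interior_Ici] at ht
      exact ((hφd t ht).differentiableAt).differentiableWithinAt
    · intro t ht
      rw [interior_Ici] at ht
      rw [(hφd t ht).deriv]
      have hft := hfpos t ht.le
      have haf : a ≤ f t := hinv t ht.le
      have hft2 : a ^ 2 ≤ f t ^ 2 := by nlinarith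
      have hdiv : C / f t ^ 2 ≤ C / a ^ 2 :=
        div_le_div_of_nonneg_left hC.le ha2pos hft2
      have hrw : (f t ^ 2 - C) / f t ^ 2 = 1 - C / f t ^ 2 := by
        field_simp
      rw [hrw, hk_def]
      linarith
  -- derive a contradiction at a large time
  set T := t₀ + 1 / (a * k) + 1 with hT_def
  have hak : 0 < a * k := mul_pos h0 hk
  have hT : t₀ ≤ T := by
    have : 0 < 1 / (a * k) := by positivity
    simp only [hT_def]; linarith
  have hle : φ t₀ ≤ φ T := hφmono (self_mem_Ici) (mem_Ici.2 hT) hT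
  have hfT := hfpos T hT
  have hfT_inv : 0 < (f T)⁻¹ := inv_pos.2 hfT
  have hfa_inv : (f t₀)⁻¹ = a⁻¹ := by rw [ha_def]
  have hkey : k * (T - t₀) = 1 / a + k := by
    have : T - t₀ = 1 / (a * k) + 1 := by simp [hT_def]; ring
    rw [this]
    field_simp
  simp only [hφ_def] at hle
  rw [hfa_inv] at hle
  have hfin : k * (T - t₀) ≤ (f t₀)⁻¹ - (f T)⁻¹ := by
    rw [hfa_inv]; linarith
  rw [hkey, hfa_inv] at hfin
  have hainv : a⁻¹ = 1 / a := (one_div a).symm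
  rw [hainv] at hfin
  clear_value a k T
  linarith

/-- If `C > 0` and a differentiable function `f : ℝ → ℝ` satisfies the Riccati
equation `f' = f² - C` on all of `ℝ`, then `f` is bounded: `f(t)² ≤ C` for all `t`. -/
theorem riccati_global_bounded (C : ℝ) (hC : 0 < C) (f : ℝ → ℝ)
    (hf : Differentiable ℝ f)
    (hode : ∀ t : ℝ, deriv f t = f t ^ 2 - C) :
    ∀ t : ℝ, f t ^ 2 ≤ C := by
  intro t
  by_contra hgt
  push_neg at hgt
  have hsq : Real.sqrt C ^ 2 = C := Real.sq_sqrt hC.le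
  have hsn : 0 ≤ Real.sqrt C := Real.sqrt_nonneg C
  have hcases : Real.sqrt C < f t ∨ Real.sqrt C < -f t := by
    by_contra hco
    push_neg at hco
    nlinarith [hco.1, hco.2]
  rcases hcases with hc | hc
  · exact riccati_no_big C hC f hf hode t hc
  · set F : ℝ → ℝ := fun s => -f (-s) with hF_def
    have hF : Differentiable ℝ F := (hf.comp differentiable_neg).neg
    have hFode : ∀ s : ℝ, deriv F s = F s ^ 2 - C := by
      intro s
      have h1 : HasDerivAt (fun s : ℝ => f (-s)) (deriv f (-s) * (-1)) s :=
        ((hf (-s)).hasDerivAt).comp s (hasDerivAt_neg s)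
      have h2 : HasDerivAt F (-(deriv f (-s) * (-1))) s := h1.neg
      rw [h2.deriv, hode (-s)]
      simp [hF_def]
    have hFt : Real.sqrt C < F (-t) := by simp [hF_def]; exact hc
    exact riccati_no_big C hC F hF hFode (-t) hFt
end

section
/- Let C > 0. A differentiable function f : ℝ → ℝ satisfies f'(t) = f(t)² − C for every t ∈ ℝ if and only if there exists f₀ ∈ [−√C, √C] such that for all t ∈ ℝ, f(t) = √C · (1 − 2(√C − f₀) / ((√C + f₀)·exp(−2t√C) + (√C − f₀))); in this case necessarily f₀ = f(0). (For every f₀ ∈ [−√C, √C] and every t ∈ ℝ the denominator (√C + f₀)·exp(−2t√C) + (√C − f₀) is strictly positive, so the formula is well defined.) -/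
private lemma riccati_denom_pos (s a : ℝ) (hs : 0 < s) (h1 : -s ≤ a) (h2 : a ≤ s) (x : ℝ) :
    0 < (s + a) * Real.exp x + (s - a) := by
  rcases le_or_gt a 0 with h | h
  · nlinarith [mul_nonneg (by linarith : (0:ℝ) ≤ s + a) (Real.exp_pos x).le]
  · nlinarith [mul_pos (by linarith : (0:ℝ) < s + a) (Real.exp_pos x)]

private lemma riccati_bound (s a : ℝ) (hs : 0 < s)
    (hsum : ∀ t : ℝ, 0 < (s - a) * Real.exp (s * t) + (s + a) * Real.exp (-(s * t))) :
    -s ≤ a ∧ a ≤ s := by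
  by_contra hna
  have hprod : (s - a) * (s + a) < 0 := by
    rcases not_and_or.mp hna with h | h <;> push_neg at h <;> nlinarith
  have hne : s - a ≠ 0 := by
    intro h0
    rw [h0] at hprod
    simp at hprod
  set r : ℝ := (-(s + a)) / (s - a) with hrdef
  have hr : 0 < r := by
    rw [hrdef, div_pos_iff]
    rcases lt_or_gt_of_ne hne with hlt | hgt
    · right; constructor <;> nlinarith
    · left; constructor <;> nlinarith
  set t₀ : ℝ := Real.log r / (2 * s) with ht₀
  have h2 : 2 * s * t₀ = Real.log r := by
    rw [ht₀]; field_simp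
  have hE2 : Real.exp (s * t₀) * Real.exp (s * t₀) = r := by
    rw [← Real.exp_add, show s * t₀ + s * t₀ = 2 * s * t₀ by ring, h2, Real.exp_log hr]
  have hE1 : Real.exp (s * t₀) * Real.exp (-(s * t₀)) = 1 := by
    rw [← Real.exp_add]; simp
  have hrr : (s - a) * r = -(s + a) := by
    rw [hrdef]; field_simp
  have h3 := mul_pos (hsum t₀) (Real.exp_pos (s * t₀))
  have h4 : ((s - a) * Real.exp (s * t₀) + (s + a) * Real.exp (-(s * t₀))) * Real.exp (s * t₀)
      = (s - a) * r + (s + a) := by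
    linear_combination (s - a) * hE2 + (s + a) * hE1
  rw [h4] at h3
  linarith

open Real in
/-- Explicit form of all global solutions of the Riccati equation `f' = f² - C`, `C > 0`:
`f` solves the ODE iff it is given by the explicit formula for some `f₀ ∈ [-√C, √C]`
(in which case necessarily `f₀ = f 0`); the denominator in the formula is always positive. -/
theorem riccati_global_solutions (C : ℝ) (hC : 0 < C) (f : ℝ → ℝ)
    (hf : Differentiable ℝ f) :
    ((∀ t : ℝ, deriv f t = f t ^ 2 - C) ↔
      ∃ f₀ ∈ Set.Icc (-Real.sqrt C) (Real.sqrt C), ∀ t : ℝ,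
        f t = Real.sqrt C * (1 - 2 * (Real.sqrt C - f₀) /
          ((Real.sqrt C + f₀) * Real.exp (-2 * t * Real.sqrt C) + (Real.sqrt C - f₀)))) ∧
    (∀ f₀ ∈ Set.Icc (-Real.sqrt C) (Real.sqrt C),
      (∀ t : ℝ, f t = Real.sqrt C * (1 - 2 * (Real.sqrt C - f₀) /
          ((Real.sqrt C + f₀) * Real.exp (-2 * t * Real.sqrt C) + (Real.sqrt C - f₀)))) →
      f₀ = f 0) ∧
    (∀ f₀ ∈ Set.Icc (-Real.sqrt C) (Real.sqrt C), ∀ t : ℝ,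
      0 < (Real.sqrt C + f₀) * Real.exp (-2 * t * Real.sqrt C) + (Real.sqrt C - f₀)) := by
  have hs : 0 < Real.sqrt C := Real.sqrt_pos.mpr hC
  have hs2 : Real.sqrt C ^ 2 = C := Real.sq_sqrt hC.le
  set s := Real.sqrt C with hsdef
  refine ⟨⟨?_, ?_⟩, ?_, ?_⟩
  · -- ODE ⇒ explicit formula
    intro h
    have hfc : Continuous f := hf.continuous
    set F : ℝ → ℝ := fun t => ∫ x in (0:ℝ)..t, f x with hFdef
    have hFd : ∀ t : ℝ, HasDerivAt F (f t) t := fun t =>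
      intervalIntegral.integral_hasDerivAt_right (hfc.intervalIntegrable 0 t)
        (hfc.stronglyMeasurableAtFilter _ _) hfc.continuousAt
    set u : ℝ → ℝ := fun t => Real.exp (-(F t)) with hudef
    have hu_pos : ∀ t, 0 < u t := fun t => Real.exp_pos _
    have hud : ∀ t : ℝ, HasDerivAt u (-(f t) * u t) t := by
      intro t
      have := ((hFd t).neg).exp
      simpa [hudef, mul_comm] using this
    have hd : ∀ t : ℝ, HasDerivAt f (f t ^ 2 - C) t := fun t => (h t) ▸ (hf t).hasDerivAt
    have hg1 : ∀ t : ℝ, HasDerivAt (fun t => (s - f t) * u t * Real.exp (-(s * t))) 0 t := by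
      intro t
      have h1 : HasDerivAt (fun t => (s - f t) * u t)
          ((0 - (f t ^ 2 - C)) * u t + (s - f t) * (-(f t) * u t)) t :=
        ((hasDerivAt_const t s).sub (hd t)).mul (hud t)
      have hin : HasDerivAt (fun t : ℝ => -(s * t)) (-s) t := by
        simpa using ((hasDerivAt_id t).const_mul s).fun_neg
      have h3 := h1.mul hin.exp
      refine h3.congr_deriv ?_
      rw [← hs2]; ring
    have hg2 : ∀ t : ℝ, HasDerivAt (fun t => (s + f t) * u t * Real.exp (s * t)) 0 t := by
      intro t
      have h1 : HasDerivAt (fun t => (s + f t) * u t)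
          ((0 + (f t ^ 2 - C)) * u t + (s + f t) * (-(f t) * u t)) t :=
        ((hasDerivAt_const t s).add (hd t)).mul (hud t)
      have hin : HasDerivAt (fun t : ℝ => s * t) s t := by
        simpa using (hasDerivAt_id t).const_mul s
      have h3 := h1.mul hin.exp
      refine h3.congr_deriv ?_
      rw [← hs2]; ring
    have hu0 : u 0 = 1 := by simp [hudef, hFdef]
    have hc1 : ∀ t : ℝ, (s - f t) * u t * Real.exp (-(s * t)) = s - f 0 := by
      intro t
      have := is_const_of_deriv_eq_zero (f := fun t => (s - f t) * u t * Real.exp (-(s * t)))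
        (fun x => (hg1 x).differentiableAt) (fun x => (hg1 x).deriv) t 0
      simpa [hu0] using this
    have hc2 : ∀ t : ℝ, (s + f t) * u t * Real.exp (s * t) = s + f 0 := by
      intro t
      have := is_const_of_deriv_eq_zero (f := fun t => (s + f t) * u t * Real.exp (s * t))
        (fun x => (hg2 x).differentiableAt) (fun x => (hg2 x).deriv) t 0
      simpa [hu0] using this
    have hmm : ∀ t : ℝ, Real.exp (-(s * t)) * Real.exp (s * t) = 1 := by
      intro t; rw [← Real.exp_add]; simp
    have he1 : ∀ t : ℝ, (s - f 0) * Real.exp (s * t) = (s - f t) * u t := by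
      intro t
      linear_combination (-(Real.exp (s * t))) * hc1 t + ((s - f t) * u t) * hmm t
    have he2 : ∀ t : ℝ, (s + f 0) * Real.exp (-(s * t)) = (s + f t) * u t := by
      intro t
      linear_combination (-(Real.exp (-(s * t)))) * hc2 t + ((s + f t) * u t) * hmm t
    have hsum : ∀ t : ℝ, 0 < (s - f 0) * Real.exp (s * t) + (s + f 0) * Real.exp (-(s * t)) := by
      intro t
      rw [he1 t, he2 t]
      nlinarith [hu_pos t, mul_pos hs (hu_pos t)]
    obtain ⟨hb1, hb2⟩ := riccati_bound s (f 0) hs hsum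
    refine ⟨f 0, ⟨hb1, hb2⟩, fun t => ?_⟩
    have hE2 : Real.exp (-2 * t * s) = Real.exp (-(s * t)) * Real.exp (-(s * t)) := by
      rw [← Real.exp_add]; ring_nf
    have hD := riccati_denom_pos s (f 0) hs hb1 hb2 (-2 * t * s)
    have hft : f t * ((s - f 0) * Real.exp (s * t) + (s + f 0) * Real.exp (-(s * t)))
        = s * ((s + f 0) * Real.exp (-(s * t)) - (s - f 0) * Real.exp (s * t)) := by
      linear_combination (f t + s) * he1 t + (f t - s) * he2 t
    have hmt := hmm t
    set E : ℝ := Real.exp (s * t) with hEdef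
    set E' : ℝ := Real.exp (-(s * t)) with hE'def
    set X : ℝ := Real.exp (-2 * t * s) with hXdef
    have hne : ((s + f 0) * X + (s - f 0)) ≠ 0 := ne_of_gt hD
    field_simp
    linear_combination (f t - s) * (s + f 0) * hE2 + E' * hft +
      (-(f t + s)) * (s - f 0) * hmt
  · -- explicit formula ⇒ ODE
    rintro ⟨f₀, hf₀, hform⟩ t
    have hD := riccati_denom_pos s f₀ hs hf₀.1 hf₀.2 (-2 * t * s)
    have hin : HasDerivAt (fun t : ℝ => -2 * t * s) (-2 * s) t := by
      simpa [mul_comm, mul_assoc, mul_left_comm] using (hasDerivAt_id t).const_mul (-2 * s)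
    have hDd : HasDerivAt (fun t : ℝ => (s + f₀) * Real.exp (-2 * t * s) + (s - f₀))
        ((s + f₀) * (Real.exp (-2 * t * s) * (-2 * s))) t :=
      ((hin.exp).const_mul (s + f₀)).add_const _
    have hgd : HasDerivAt (fun t : ℝ => s * (1 - 2 * (s - f₀) /
        ((s + f₀) * Real.exp (-2 * t * s) + (s - f₀))))
        (s * -((0 * ((s + f₀) * Real.exp (-2 * t * s) + (s - f₀)) -
          2 * (s - f₀) * ((s + f₀) * (Real.exp (-2 * t * s) * (-2 * s)))) /
          ((s + f₀) * Real.exp (-2 * t * s) + (s - f₀)) ^ 2)) t :=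
      (((hasDerivAt_const t (2 * (s - f₀))).div hDd (ne_of_gt hD)).const_sub 1).const_mul s
    have hfeq : f = fun t : ℝ => s * (1 - 2 * (s - f₀) /
        ((s + f₀) * Real.exp (-2 * t * s) + (s - f₀))) := funext hform
    have hder : deriv f t = s * -((0 * ((s + f₀) * Real.exp (-2 * t * s) + (s - f₀)) -
          2 * (s - f₀) * ((s + f₀) * (Real.exp (-2 * t * s) * (-2 * s)))) /
          ((s + f₀) * Real.exp (-2 * t * s) + (s - f₀)) ^ 2) := by
      rw [hfeq]; exact hgd.deriv
    rw [hder, hform t, ← hs2]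
    set X : ℝ := Real.exp (-2 * t * s) with hXdef
    have hne : ((s + f₀) * X + (s - f₀)) ≠ 0 := ne_of_gt hD
    field_simp
    ring
  · -- f₀ is determined: f₀ = f 0
    intro f₀ hf₀ hform
    have h0 := hform 0
    rw [show (-2 : ℝ) * 0 * s = 0 by ring, Real.exp_zero] at h0
    rw [show (s + f₀) * 1 + (s - f₀) = 2 * s by ring] at h0
    rw [h0]
    field_simp
    ring
  · -- positivity of the denominator
    intro f₀ hf₀ t
    exact riccati_denom_pos s f₀ hs hf₀.1 hf₀.2 _
end

section
/- Let V and W be finite-dimensional real inner product spaces, let (e₁, …, eₙ) be an orthonormal basis of V, let h : V × V → W be a symmetric bilinear map, and set H = Σₐ h(eₐ, eₐ). Then the following are equivalent: (1) for every symmetric bilinear form B on W, B(H, H) = Σ_{a,b} B(h(eₐ, e_b), h(eₐ, e_b)); (2) either h = 0, or all three of the following hold: H ≠ 0, ⟨H, H⟩ = Σ_{a,b} ⟨h(eₐ, e_b), h(eₐ, e_b)⟩, and for all a, b there exists c ∈ ℝ with h(eₐ, e_b) = c·H. -/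
/-- Characterization of `Φ_h = 0` in the positive-definite case: for a symmetric bilinear
map `h : V × V → W` with mean curvature vector `H = Σₐ h(eₐ, eₐ)`, the identity
`B(H,H) = Σ_{a,b} B(h(eₐ,e_b), h(eₐ,e_b))` holds for every symmetric bilinear form `B` on `W`
iff either `h = 0`, or `H ≠ 0`, `⟨H,H⟩ = Σ_{a,b} ⟨h(eₐ,e_b), h(eₐ,e_b)⟩` and the image of `h`
is spanned by `H`. -/
theorem Phi_h_eq_zero_iff
    {V W : Type*} [NormedAddCommGroup V] [InnerProductSpace ℝ V] [FiniteDimensional ℝ V]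
    [NormedAddCommGroup W] [InnerProductSpace ℝ W] [FiniteDimensional ℝ W]
    {n : ℕ} (e : OrthonormalBasis (Fin n) ℝ V)
    (h : V →ₗ[ℝ] V →ₗ[ℝ] W)
    (hsym : ∀ X Y : V, h X Y = h Y X)
    (H : W) (hH : H = ∑ a : Fin n, h (e a) (e a)) :
    (∀ B : W →ₗ[ℝ] W →ₗ[ℝ] ℝ, (∀ x y : W, B x y = B y x) →
        B H H = ∑ a : Fin n, ∑ b : Fin n, B (h (e a) (e b)) (h (e a) (e b))) ↔
      (h = 0 ∨
        (H ≠ 0 ∧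
          (inner ℝ H H : ℝ) = ∑ a : Fin n, ∑ b : Fin n,
            (inner ℝ (h (e a) (e b)) (h (e a) (e b)) : ℝ) ∧
          ∀ a b : Fin n, ∃ c : ℝ, h (e a) (e b) = c • H)) := by
  constructor
  · intro hB
    -- For every u, ⟨H,u⟩² = Σ ⟨h_ab,u⟩²
    have hBu : ∀ u : W, (inner ℝ H u : ℝ)^2
        = ∑ a : Fin n, ∑ b : Fin n, (inner ℝ (h (e a) (e b)) u : ℝ)^2 := by
      intro u
      have := hB (LinearMap.mk₂ ℝ (fun x y => (inner ℝ x u : ℝ) * (inner ℝ y u : ℝ))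
        (by intros; simp [inner_add_left]; ring)
        (by intros; simp [inner_smul_left]; ring)
        (by intros; simp [inner_add_left]; ring)
        (by intros; simp [inner_smul_left]; ring)) (by intro x y; simp [mul_comm])
      simpa [sq] using this
    -- key: if u ⊥ H then u ⊥ h_ab for all a b
    have key : ∀ u : W, (inner ℝ H u : ℝ) = 0 →
        ∀ a b : Fin n, (inner ℝ (h (e a) (e b)) u : ℝ) = 0 := by
      intro u hu a b
      have hsum : ∑ a : Fin n, ∑ b : Fin n, (inner ℝ (h (e a) (e b)) u : ℝ)^2 = 0 := by
        rw [← hBu u, hu]; ring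
      have hterm := (Finset.sum_eq_zero_iff_of_nonneg (fun i _ =>
        Finset.sum_nonneg (fun j _ => sq_nonneg _))).mp hsum a (Finset.mem_univ a)
      have := (Finset.sum_eq_zero_iff_of_nonneg (fun j _ => sq_nonneg _)).mp
        hterm b (Finset.mem_univ b)
      exact pow_eq_zero_iff (by norm_num) |>.mp this
    by_cases hH0 : H = 0
    · left
      have hz : ∀ a b : Fin n, h (e a) (e b) = 0 := by
        intro a b
        have h0 : (inner ℝ (h (e a) (e b)) (h (e a) (e b)) : ℝ) = 0 :=
          key (h (e a) (e b)) (by rw [hH0, inner_zero_left]) a b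
        exact inner_self_eq_zero.mp h0
      apply e.toBasis.ext
      intro a
      apply e.toBasis.ext
      intro b
      simpa using hz a b
    · right
      refine ⟨hH0, ?_, ?_⟩
      · have := hB (LinearMap.mk₂ ℝ (fun x y => (inner ℝ x y : ℝ))
          (fun x y z => inner_add_left x y z)
          (by intros; simp [inner_smul_left])
          (fun x y z => inner_add_right x y z)
          (by intros; simp [inner_smul_right]))
          (by intro x y; simp only [LinearMap.mk₂_apply]; exact (real_inner_comm x y).symm)
        simpa using this
      · intro a b
        set k : ℝ := (inner ℝ H (h (e a) (e b)) : ℝ) / (inner ℝ H H : ℝ) with hk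
        refine ⟨k, ?_⟩
        set u : W := h (e a) (e b) - k • H with hu
        have hne : (inner ℝ H H : ℝ) ≠ 0 := fun hzz => hH0 (inner_self_eq_zero.mp hzz)
        have hHu : (inner ℝ H u : ℝ) = 0 := by
          rw [hu, inner_sub_right, real_inner_smul_right, hk,
            div_mul_cancel₀ _ hne]
          ring
        have habu : (inner ℝ (h (e a) (e b)) u : ℝ) = 0 := key u hHu a b
        have huu : (inner ℝ u u : ℝ) = 0 := by
          have h1 : (inner ℝ ((h (e a)) (e b) - k • H) u : ℝ) = 0 := by
            rw [inner_sub_left, real_inner_smul_left, habu, hHu]; ring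
          exact h1
        have h0 : u = 0 := inner_self_eq_zero.mp huu
        have h2 : h (e a) (e b) - k • H = 0 := by rw [← hu]; exact h0
        exact sub_eq_zero.mp h2
  · rintro (h0 | ⟨hH0, hinner, hspan⟩) B hBsym
    · rw [h0] at hH ⊢
      simp at hH
      simp [hH]
    · choose c hc using hspan
      have hterm : ∀ a b : Fin n,
          (inner ℝ (h (e a) (e b)) (h (e a) (e b)) : ℝ) = (c a b)^2 * (inner ℝ H H : ℝ) := by
        intro a b
        rw [hc a b, real_inner_smul_left, real_inner_smul_right]; ring
      have hne : (inner ℝ H H : ℝ) ≠ 0 := fun hzz => hH0 (inner_self_eq_zero.mp hzz)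
      have hsum1 : (∑ a : Fin n, ∑ b : Fin n, (c a b)^2) = 1 := by
        have h1 : (∑ a : Fin n, ∑ b : Fin n,
              (inner ℝ (h (e a) (e b)) (h (e a) (e b)) : ℝ))
            = (∑ a : Fin n, ∑ b : Fin n, (c a b)^2) * (inner ℝ H H : ℝ) := by
          simp_rw [hterm, ← Finset.sum_mul]
        have h2 : (∑ a : Fin n, ∑ b : Fin n, (c a b)^2) * (inner ℝ H H : ℝ)
            = 1 * (inner ℝ H H : ℝ) := by rw [one_mul, ← h1, ← hinner]
        exact mul_right_cancel₀ hne h2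
      have hBterm : ∀ a b : Fin n,
          B (h (e a) (e b)) (h (e a) (e b)) = (c a b)^2 * B H H := by
        intro a b
        rw [hc a b]
        simp [sq]
        ring
      simp_rw [hBterm, ← Finset.sum_mul, hsum1, one_mul]
end

section
/- Let n > 0 and C be real numbers, let P, τ, y : ℝ → ℝ be functions with P differentiable and P(t) > 0 for all t, and y differentiable, and let u : ℝ → ℝ be a positive differentiable function satisfying u'(t) = −2·√(P(t))·y(t)·u(t) for all t ∈ ℝ. Then u' is differentiable, and for every t ∈ ℝ the equation u''(t) − u'(t)²/u(t) − u'(t)·( P'(t)/(2·P(t)) + τ(t)·√(P(t)) ) + (2C/n)·P(t)·u(t) = 0 holds if and only if y'(t) = τ(t)·√(P(t))·y(t) + (C/n)·√(P(t)). -/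
/-- In biregular foliated coordinates with `|g₀₀| = P`, a metric component
`u = g_{ii}` of the form `u' = -2 √P · y · u` satisfies the second-order
Euler–Lagrange equation
`u'' - u'²/u - u'·(P'/(2P) + τ√P) + (2C/n)·P·u = 0`
exactly when the principal curvature `y` solves the linear ODE
`y' = τ√P·y + (C/n)√P`. -/
theorem biregular_second_order_iff_first_order
    (n C : ℝ) (hn : 0 < n) (P τ y u : ℝ → ℝ)
    (hP : Differentiable ℝ P) (hPpos : ∀ t : ℝ, 0 < P t)
    (hy : Differentiable ℝ y)
    (hu : Differentiable ℝ u) (hupos : ∀ t : ℝ, 0 < u t)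
    (huode : ∀ t : ℝ, deriv u t = -2 * Real.sqrt (P t) * y t * u t) :
    Differentiable ℝ (deriv u) ∧
    ∀ t : ℝ,
      (deriv (deriv u) t - (deriv u t) ^ 2 / u t
          - deriv u t * (deriv P t / (2 * P t) + τ t * Real.sqrt (P t))
          + (2 * C / n) * P t * u t = 0
        ↔ deriv y t = τ t * Real.sqrt (P t) * y t + (C / n) * Real.sqrt (P t)) := by
  have hspos : ∀ t, 0 < Real.sqrt (P t) := fun t => Real.sqrt_pos.mpr (hPpos t)
  have hs : ∀ t, HasDerivAt (fun t => Real.sqrt (P t))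
      (deriv P t / (2 * Real.sqrt (P t))) t := by
    intro t
    have h := (Real.hasDerivAt_sqrt (hPpos t).ne').comp t (hP t).hasDerivAt
    refine h.congr_deriv ?_
    ring
  have hueq : deriv u = fun t => -2 * Real.sqrt (P t) * y t * u t := funext huode
  have hdu : ∀ t, HasDerivAt (deriv u)
      (-2 * ((deriv P t / (2 * Real.sqrt (P t))) * y t * u t
        + Real.sqrt (P t) * deriv y t * u t
        + Real.sqrt (P t) * y t * (-2 * Real.sqrt (P t) * y t * u t))) t := by
    intro t
    rw [hueq]
    have h := ((((hs t).mul (hy t).hasDerivAt).mul (hu t).hasDerivAt).const_mul (-2 : ℝ))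
    rw [huode t] at h
    rw [show (fun t => -2 * Real.sqrt (P t) * y t * u t) = fun r => -2 * ((fun t => Real.sqrt (P t)) * y * u) r from funext fun r => by simp only [Pi.mul_apply]; ring]
    refine h.congr_deriv ?_
    simp only [Pi.mul_apply]; ring
  constructor
  · exact fun t => ((hdu t).differentiableAt)
  · intro t
    have hdd : deriv (deriv u) t =
        -2 * ((deriv P t / (2 * Real.sqrt (P t))) * y t * u t
        + Real.sqrt (P t) * deriv y t * u t
        + Real.sqrt (P t) * y t * (-2 * Real.sqrt (P t) * y t * u t)) := (hdu t).deriv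
    set s := Real.sqrt (P t) with hsdef
    have hs2 : s ^ 2 = P t := Real.sq_sqrt (hPpos t).le
    have hsne : s ≠ 0 := (hspos t).ne'
    have hune : u t ≠ 0 := (hupos t).ne'
    have hPne : P t ≠ 0 := (hPpos t).ne'
    have key : deriv (deriv u) t - (deriv u t) ^ 2 / u t
          - deriv u t * (deriv P t / (2 * P t) + τ t * s)
          + (2 * C / n) * P t * u t
        = -2 * s * u t * (deriv y t - τ t * s * y t - (C / n) * s) := by
      rw [hdd, huode t, ← hsdef, ← hs2]
      field_simp
      ring
    rw [key]
    constructor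
    · intro h
      have h2 : deriv y t - τ t * s * y t - (C / n) * s = 0 := by
        have := mul_eq_zero.mp h
        rcases this with h' | h'
        · exact absurd h' (by positivity)
        · exact h'
      linarith
    · intro h
      rw [h]; ring
end
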